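/- Let K be a locally compact Hausdorff space. The following are equivalent: (i) every σ-compact subset of K has compact closure in K; (ii) for every continuous function f : K → ℂ vanishing at infinity (f tends to 0 along the cocompact filter) there is a compact set K' ⊆ K such that f(t) = 0 for all t ∉ K'; (iii) for every continuous function f : K → ℂ that converges to some c ∈ ℂ along the cocompact filter there is a compact set K' ⊆ K such that f(t) = c for all t ∉ K'. -/

import Mathlib

open Filter

/-- Auxiliary: construction of a function vanishing at infinity, positive on a given
σ-compact set. -/
lemma sigmaCompact_exists_fun (K : Type*) [TopologicalSpace K] [LocallyCompactSpace K]
    [T2Space K] {s : Set K} (hs : IsSigmaCompact s) :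
    ∃ f : C(K, ℂ), Tendsto f (cocompact K) (nhds 0) ∧ ∀ t ∈ s, f t ≠ 0 := by
  obtain ⟨c, hc, rfl⟩ := hs
  -- for each n choose gₙ : C(K,ℝ) with gₙ = 1 on c n, compact support, 0 ≤ gₙ ≤ 1
  have hg : ∀ n : ℕ, ∃ g : C(K, ℝ), Set.EqOn g 1 (c n) ∧ Set.EqOn g 0 (∅ : Set K) ∧
      HasCompactSupport g ∧ ∀ x, g x ∈ Set.Icc (0:ℝ) 1 := fun n =>
    exists_continuous_one_zero_of_isCompact (hc n) isClosed_empty (Set.disjoint_empty _)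
  choose g hg1 _ hgsupp hg01 using hg
  have hb : ∀ n (t : K), ‖(1/2:ℝ)^(n+1) * g n t‖ ≤ (1/2)^(n+1) := by
    intro n t
    rw [norm_mul, Real.norm_eq_abs, Real.norm_eq_abs,
      abs_of_nonneg (by positivity), abs_of_nonneg (hg01 n t).1]
    nlinarith [(hg01 n t).2, pow_pos (by norm_num : (0:ℝ) < 1/2) (n+1)]
  have hsum : Summable (fun n : ℕ => ((1/2:ℝ))^(n+1)) :=
    (summable_geometric_of_lt_one (by norm_num) (by norm_num)).comp_injective
      (add_left_injective 1)
  have hsummt : ∀ t : K, Summable (fun n : ℕ => (1/2:ℝ)^(n+1) * g n t) := fun t =>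
    Summable.of_norm_bounded hsum (fun n => hb n t)
  set F : K → ℝ := fun t => ∑' n : ℕ, (1/2:ℝ)^(n+1) * g n t with hF
  have hFcont : Continuous F :=
    continuous_tsum (fun n => continuous_const.mul (g n).continuous) hsum hb
  have hFnonneg : ∀ t, 0 ≤ F t := fun t =>
    tsum_nonneg fun n => mul_nonneg (by positivity) (hg01 n t).1
  have hFpos : ∀ t ∈ ⋃ n, c n, 0 < F t := by
    rintro t ht
    obtain ⟨n, hn⟩ := Set.mem_iUnion.1 ht
    refine Summable.tsum_pos (hsummt t) (fun m => mul_nonneg (by positivity) (hg01 m t).1) n ?_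
    have : g n t = 1 := hg1 n hn
    rw [this, mul_one]
    positivity
  have hFtend : Tendsto F (cocompact K) (nhds 0) := by
    rw [Metric.tendsto_nhds]
    intro ε hε
    obtain ⟨N, hN⟩ := exists_pow_lt_of_lt_one hε (by norm_num : (1/2:ℝ) < 1)
    rw [Filter.eventually_iff, mem_cocompact]
    refine ⟨⋃ n ∈ Finset.range N, tsupport (g n),
      (Finset.range N).isCompact_biUnion (fun n _ => hgsupp n), ?_⟩
    intro t ht
    simp only [Set.mem_compl_iff, Set.mem_iUnion, not_exists] at ht
    have hzero : ∀ n < N, g n t = 0 := by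
      intro n hn
      by_contra h
      exact ht n (Finset.mem_range.2 hn) (subset_tsupport _ h)
    have key : F t ≤ (1/2:ℝ)^N := by
      have h1 : F t = ∑' n : ℕ, (1/2:ℝ)^(n+N+1) * g (n+N) t := by
        show (∑' n : ℕ, (1/2:ℝ)^(n+1) * g n t) = _
        rw [← Summable.sum_add_tsum_nat_add N (hsummt t)]
        have : ∑ i ∈ Finset.range N, (1/2:ℝ)^(i+1) * g i t = 0 :=
          Finset.sum_eq_zero fun i hi => by
            rw [hzero i (Finset.mem_range.1 hi), mul_zero]
        rw [this, zero_add]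
      have h2 : ∑' n : ℕ, (1/2:ℝ)^(n+N+1) * g (n+N) t ≤ ∑' n : ℕ, (1/2:ℝ)^(n+N+1) := by
        refine Summable.tsum_le_tsum (fun n => ?_) ((hsummt t).comp_injective (add_left_injective N))
          (hsum.comp_injective (add_left_injective N))
        calc (1/2:ℝ)^(n+N+1) * g (n+N) t ≤ (1/2:ℝ)^(n+N+1) * 1 := by
              exact mul_le_mul_of_nonneg_left (hg01 _ t).2 (by positivity)
          _ = (1/2:ℝ)^(n+N+1) := mul_one _
      have h3 : ∑' n : ℕ, ((1:ℝ)/2)^(n+N+1) = (1/2:ℝ)^N := by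
        simp_rw [pow_add, pow_one]
        rw [tsum_mul_right, tsum_mul_right,
          tsum_geometric_of_lt_one (by norm_num) (by norm_num)]
        ring_nf
      rw [h1]; rw [h3] at h2; exact h2
    rw [Set.mem_setOf_eq, Real.dist_eq, sub_zero, abs_of_nonneg (hFnonneg t)]
    exact lt_of_le_of_lt key hN
  refine ⟨⟨fun t => (F t : ℂ), Complex.continuous_ofReal.comp hFcont⟩, ?_, ?_⟩
  · have : Tendsto (fun x : ℝ => (x : ℂ)) (nhds 0) (nhds 0) := by
      simpa using Complex.continuous_ofReal.tendsto 0
    exact this.comp hFtend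
  · intro t ht
    simp only [ContinuousMap.coe_mk, ne_eq, Complex.ofReal_eq_zero]
    exact ne_of_gt (hFpos t ht)

/-- For a locally compact Hausdorff space `K` the following are equivalent:
(i) every `σ`-compact subset of `K` has compact closure;
(ii) every continuous `f : K → ℂ` vanishing at infinity vanishes outside some compact set;
(iii) every continuous `f : K → ℂ` having a limit `c` at infinity equals `c` outside some
compact set. -/
theorem sigmaCompact_precompact_tfae
    (K : Type*) [TopologicalSpace K] [LocallyCompactSpace K] [T2Space K] :
    ((∀ s : Set K, IsSigmaCompact s → IsCompact (closure s)) ↔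
      (∀ f : C(K, ℂ), Tendsto f (cocompact K) (nhds 0) →
        ∃ K' : Set K, IsCompact K' ∧ ∀ t ∉ K', f t = 0)) ∧
    ((∀ f : C(K, ℂ), Tendsto f (cocompact K) (nhds 0) →
        ∃ K' : Set K, IsCompact K' ∧ ∀ t ∉ K', f t = 0) ↔
      (∀ f : C(K, ℂ), ∀ c : ℂ, Tendsto f (cocompact K) (nhds c) →
        ∃ K' : Set K, IsCompact K' ∧ ∀ t ∉ K', f t = c)) := by
  constructor
  · constructor
    · -- (i) → (ii)
      intro hi f hf
      have hA : ∀ n : ℕ, IsCompact {t : K | (1:ℝ)/(n+1) ≤ ‖f t‖} := by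
        intro n
        have hball : f ⁻¹' Metric.ball 0 ((1:ℝ)/(n+1)) ∈ cocompact K :=
          hf (Metric.ball_mem_nhds 0 (by positivity))
        obtain ⟨C, hC, hsub⟩ := mem_cocompact.1 hball
        refine hC.of_isClosed_subset
          (isClosed_le continuous_const (continuous_norm.comp f.continuous)) ?_
        intro t ht
        by_contra htC
        have := hsub htC
        simp only [Set.mem_preimage, Metric.mem_ball, dist_zero_right] at this
        exact absurd ht (not_le.2 this)
      have hsigma : IsSigmaCompact {t : K | f t ≠ 0} := by
        refine ⟨fun n => {t : K | (1:ℝ)/(n+1) ≤ ‖f t‖}, hA, ?_⟩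
        ext t
        simp only [Set.mem_iUnion, Set.mem_setOf_eq, ne_eq]
        constructor
        · rintro ⟨n, hn⟩ h
          rw [h, norm_zero] at hn
          have : (0:ℝ) < 1/(n+1) := by positivity
          linarith
        · intro h
          have hpos : 0 < ‖f t‖ := norm_pos_iff.2 h
          obtain ⟨n, hn⟩ := exists_nat_one_div_lt hpos
          exact ⟨n, hn.le⟩
      refine ⟨closure {t : K | f t ≠ 0}, hi _ hsigma, fun t ht => ?_⟩
      by_contra h
      exact ht (subset_closure h)
    · -- (ii) → (i)
      intro hii s hs
      obtain ⟨f, hf0, hfne⟩ := sigmaCompact_exists_fun K hs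
      obtain ⟨K', hK', hfvan⟩ := hii f hf0
      have hsub : s ⊆ K' := fun t ht => by
        by_contra h
        exact hfne t ht (hfvan t h)
      exact hK'.of_isClosed_subset isClosed_closure
        ((closure_minimal hsub hK'.isClosed))
  · constructor
    · -- (ii) → (iii)
      intro hii f c hf
      have hsub : Tendsto (f - ContinuousMap.const K c) (cocompact K) (nhds 0) := by
        have : Tendsto (fun t => f t - c) (cocompact K) (nhds (c - c)) := hf.sub_const c
        rw [sub_self] at this; exact this
      obtain ⟨K', hK', hvan⟩ := hii _ hsub
      refine ⟨K', hK', fun t ht => ?_⟩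
      have := hvan t ht
      simp only [ContinuousMap.sub_apply, ContinuousMap.const_apply, sub_eq_zero] at this
      exact this
    · -- (iii) → (ii)
      intro hiii f hf
      exact hiii f 0 hf
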